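/- Let ξ be a logistic random variable with scale μ > 0 and let Δv ∈ ℝ. Then the quantity y = Δv + E[ξ | ξ > −Δv] equals μ·((1 + e^{Δv/μ})/e^{Δv/μ})·ln(1 + e^{Δv/μ}), and this quantity is nonnegative for every Δv ∈ ℝ. -/

import Mathlib

open MeasureTheory Real Filter Set

noncomputable def fl (μ x : ℝ) : ℝ := Real.exp (x/μ) / (μ * (1 + Real.exp (x/μ))^2)
noncomputable def Fl (μ x : ℝ) : ℝ := Real.exp (x/μ) / (1 + Real.exp (x/μ))
noncomputable def Gl (μ x : ℝ) : ℝ := x * (Fl μ x - 1) - μ * Real.log (1 + Real.exp (-x/μ))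

lemma hasDerivAt_Fl (μ : ℝ) (hμ : 0 < μ) (x : ℝ) : HasDerivAt (Fl μ) (fl μ x) x := by
  have h1 : HasDerivAt (fun x : ℝ => x/μ) (1/μ) x := by
    simpa using (hasDerivAt_id x).div_const μ
  have h2 : HasDerivAt (fun x : ℝ => Real.exp (x/μ)) (Real.exp (x/μ) * (1/μ)) x :=
    (Real.hasDerivAt_exp _).comp x h1
  have h3 : HasDerivAt (fun x : ℝ => 1 + Real.exp (x/μ)) (Real.exp (x/μ) * (1/μ)) x := by
    simpa using h2
  have hne : (1 + Real.exp (x/μ)) ≠ 0 := by positivity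
  have := h2.div h3 hne
  refine this.congr_deriv ?_
  rw [fl]
  field_simp
  ring

lemma hasDerivAt_Gl (μ : ℝ) (hμ : 0 < μ) (x : ℝ) : HasDerivAt (Gl μ) (x * fl μ x) x := by
  have h1 : HasDerivAt (fun x : ℝ => -x/μ) (-1/μ) x := by
    simpa using ((hasDerivAt_id x).neg).div_const μ
  have h2 : HasDerivAt (fun x : ℝ => Real.exp (-x/μ)) (Real.exp (-x/μ) * (-1/μ)) x :=
    (Real.hasDerivAt_exp _).comp x h1
  have h3 : HasDerivAt (fun x : ℝ => 1 + Real.exp (-x/μ)) (Real.exp (-x/μ) * (-1/μ)) x := by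
    simpa using h2
  have hne : (1 + Real.exp (-x/μ)) ≠ 0 := by positivity
  have h4 : HasDerivAt (fun x : ℝ => Real.log (1 + Real.exp (-x/μ)))
      ((Real.exp (-x/μ) * (-1/μ)) / (1 + Real.exp (-x/μ))) x := h3.log hne
  have h5 : HasDerivAt (fun x : ℝ => x * (Fl μ x - 1))
      (1 * (Fl μ x - 1) + x * fl μ x) x :=
    (hasDerivAt_id x).mul ((hasDerivAt_Fl μ hμ x).sub_const 1)
  have h6 := h5.sub (h4.const_mul μ)
  refine h6.congr_deriv ?_
  have he : Real.exp (-x/μ) = (Real.exp (x/μ))⁻¹ := by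
    rw [← Real.exp_neg]; ring_nf
  have hep : (0:ℝ) < Real.exp (x/μ) := Real.exp_pos _
  unfold Fl
  rw [he]
  field_simp
  ring

lemma tendsto_Gl (μ : ℝ) (hμ : 0 < μ) : Tendsto (Gl μ) atTop (nhds 0) := by
  have hdiv : Tendsto (fun x : ℝ => x/μ) atTop atTop := tendsto_id.atTop_div_const hμ
  have hexp : Tendsto (fun x : ℝ => Real.exp (-x/μ)) atTop (nhds 0) := by
    have : Tendsto (fun x : ℝ => Real.exp (-(x/μ))) atTop (nhds 0) :=
      Real.tendsto_exp_neg_atTop_nhds_zero.comp hdiv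
    simpa [neg_div] using this
  have hlog : Tendsto (fun x : ℝ => μ * Real.log (1 + Real.exp (-x/μ))) atTop (nhds 0) := by
    have h1 : Tendsto (fun x : ℝ => Real.log (1 + Real.exp (-x/μ))) atTop (nhds 0) := by
      have := ((Real.continuousAt_log (by norm_num : (1:ℝ)+0 ≠ 0)).tendsto).comp
        ((tendsto_const_nhds.add hexp))
      simpa [Function.comp_def] using this
    simpa using h1.const_mul μ
  have hterm1 : Tendsto (fun x : ℝ => x * (Fl μ x - 1)) atTop (nhds 0) := by
    have key : Tendsto (fun x : ℝ => x / (1 + Real.exp (x/μ))) atTop (nhds 0) := by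
      have hg : Tendsto (fun x : ℝ => μ * (x/μ * Real.exp (-(x/μ)))) atTop (nhds 0) := by
        have h1 : Tendsto (fun t : ℝ => t * Real.exp (-t)) atTop (nhds 0) := by
          simpa using Real.tendsto_pow_mul_exp_neg_atTop_nhds_zero 1
        simpa using (h1.comp hdiv).const_mul μ
      refine squeeze_zero' ?_ ?_ hg
      · filter_upwards [eventually_ge_atTop (0:ℝ)] with x hx
        positivity
      · filter_upwards [eventually_ge_atTop (0:ℝ)] with x hx
        have hep : (0:ℝ) < Real.exp (x/μ) := Real.exp_pos _
        have h2 : x / (1 + Real.exp (x/μ)) ≤ x / Real.exp (x/μ) := by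
          gcongr
          linarith
        calc x / (1 + Real.exp (x/μ)) ≤ x / Real.exp (x/μ) := h2
          _ = μ * (x/μ * Real.exp (-(x/μ))) := by
              rw [Real.exp_neg]
              field_simp
    have : (fun x : ℝ => x * (Fl μ x - 1)) = fun x => -(x / (1 + Real.exp (x/μ))) := by
      funext x
      have hne : (1 + Real.exp (x/μ)) ≠ 0 := by positivity
      rw [Fl]
      field_simp
      ring
    rw [this]
    simpa using key.neg
  have := hterm1.sub hlog
  rw [sub_zero] at this
  exact this

lemma tendsto_Fl (μ : ℝ) (hμ : 0 < μ) : Filter.Tendsto (Fl μ) Filter.atTop (nhds 1) := by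
  have hdiv : Filter.Tendsto (fun x : ℝ => x/μ) Filter.atTop Filter.atTop :=
    Filter.tendsto_id.atTop_div_const hμ
  have hexp : Filter.Tendsto (fun x : ℝ => Real.exp (-x/μ)) Filter.atTop (nhds 0) := by
    have : Filter.Tendsto (fun x : ℝ => Real.exp (-(x/μ))) Filter.atTop (nhds 0) :=
      Real.tendsto_exp_neg_atTop_nhds_zero.comp hdiv
    simpa [neg_div] using this
  have h1 : Filter.Tendsto (fun x : ℝ => 1 / (1 + Real.exp (-x/μ))) Filter.atTop (nhds 1) := by
    have := Filter.Tendsto.div (tendsto_const_nhds (x := (1:ℝ)))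
      ((tendsto_const_nhds (x := (1:ℝ))).add hexp) (by norm_num : (1:ℝ) + 0 ≠ 0)
    simpa [Pi.div_def] using this
  refine h1.congr (fun x => ?_)
  have hep : (0:ℝ) < Real.exp (x/μ) := Real.exp_pos _
  have he : Real.exp (-x/μ) = (Real.exp (x/μ))⁻¹ := by rw [← Real.exp_neg]; ring_nf
  rw [Fl, he]
  field_simp
  ring

lemma integrableOn_xfl (μ Δv : ℝ) (hμ : 0 < μ) :
    MeasureTheory.IntegrableOn (fun x => x * fl μ x) (Set.Ioi (-Δv)) := by
  have hfl : MeasureTheory.IntegrableOn (fun x => fl μ x) (Set.Ioi (-Δv)) := by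
    refine MeasureTheory.integrableOn_Ioi_deriv_of_nonneg
      ((hasDerivAt_Fl μ hμ (-Δv)).continuousAt.continuousWithinAt)
      (fun x _ => hasDerivAt_Fl μ hμ x) (fun x _ => ?_) (tendsto_Fl μ hμ)
    have hep : (0:ℝ) < Real.exp (x/μ) := Real.exp_pos _
    rw [fl]; positivity
  have hsh : MeasureTheory.IntegrableOn (fun x => (x + Δv) * fl μ x) (Set.Ioi (-Δv)) := by
    refine MeasureTheory.integrableOn_Ioi_deriv_of_nonneg
      (g := fun x => Gl μ x + Δv * Fl μ x) (l := 0 + Δv * 1)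
      (((hasDerivAt_Gl μ hμ (-Δv)).add
        ((hasDerivAt_Fl μ hμ (-Δv)).const_mul Δv)).continuousAt.continuousWithinAt)
      (fun x _ => ?_) (fun x hx => ?_)
      ((tendsto_Gl μ hμ).add ((tendsto_Fl μ hμ).const_mul Δv))
    · have := (hasDerivAt_Gl μ hμ x).add ((hasDerivAt_Fl μ hμ x).const_mul Δv)
      refine this.congr_deriv ?_
      ring
    · have hx' : 0 < x + Δv := by simpa [neg_lt_iff_pos_add] using hx
      have hep : (0:ℝ) < Real.exp (x/μ) := Real.exp_pos _
      have : 0 ≤ fl μ x := by rw [fl]; positivity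
      positivity
  have heq : (fun x : ℝ => x * fl μ x) = fun x => (x + Δv) * fl μ x - Δv * fl μ x := by
    funext x; ring
  rw [heq]
  exact hsh.sub (hfl.const_mul Δv)

/-- the expected incentive Δv + E[ξ | ξ > −Δv], for ξ logistic with
scale μ, equals μ·((1+e^{Δv/μ})/e^{Δv/μ})·ln(1+e^{Δv/μ}) and is nonnegative. -/
theorem stmt14 (μ Δv : ℝ) (hμ : 0 < μ) :
    Δv + (∫ x in Set.Ioi (-Δv), x * (Real.exp (x/μ) / (μ * (1 + Real.exp (x/μ))^2)))
        / (1 - Real.exp (-Δv/μ) / (1 + Real.exp (-Δv/μ)))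
      = μ * ((1 + Real.exp (Δv/μ)) / Real.exp (Δv/μ)) * Real.log (1 + Real.exp (Δv/μ)) ∧
    0 ≤ μ * ((1 + Real.exp (Δv/μ)) / Real.exp (Δv/μ)) * Real.log (1 + Real.exp (Δv/μ)) := by
  constructor
  · have key : (∫ x in Set.Ioi (-Δv), x * fl μ x) = 0 - Gl μ (-Δv) :=
      MeasureTheory.integral_Ioi_of_hasDerivAt_of_tendsto
        ((hasDerivAt_Gl μ hμ (-Δv)).continuousAt.continuousWithinAt)
        (fun x _ => hasDerivAt_Gl μ hμ x) (integrableOn_xfl μ Δv hμ) (tendsto_Gl μ hμ)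
    have hI : (∫ x in Set.Ioi (-Δv),
        x * (Real.exp (x/μ) / (μ * (1 + Real.exp (x/μ))^2))) = - Gl μ (-Δv) := by
      simpa [fl] using key
    rw [hI]
    have hb : Real.exp (-Δv/μ) * Real.exp (Δv/μ) = 1 := by
      rw [← Real.exp_add]
      have : -Δv/μ + Δv/μ = 0 := by ring
      rw [this, Real.exp_zero]
    have hGl : Gl μ (-Δv) = (-Δv) * (Real.exp (-Δv/μ)/(1 + Real.exp (-Δv/μ)) - 1)
        - μ * Real.log (1 + Real.exp (Δv/μ)) := by
      rw [Gl, Fl]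
      norm_num
    rw [hGl]
    set a := Real.exp (-Δv/μ) with ha_def
    set b := Real.exp (Δv/μ) with hb_def
    have ha : 0 < a := Real.exp_pos _
    have hbp : 0 < b := Real.exp_pos _
    have ha' : a = 1/b := by rw [eq_div_iff hbp.ne']; exact hb
    rw [ha']
    have h1 : (0:ℝ) < 1 + 1/b := by positivity
    have h2 : 1 - (1/b) / (1 + 1/b) ≠ 0 := by
      rw [ne_eq, sub_eq_zero]
      intro h
      have := (div_eq_one_iff_eq h1.ne').mp h.symm
      linarith
    have hb0 : b ≠ 0 := hbp.ne'
    field_simp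
    have hinv : b * b⁻¹ = 1 := mul_inv_cancel₀ hb0
    linear_combination (μ * Real.log (1 + b) - b * Δv + b * μ * Real.log (1 + b)) * hinv
  · refine mul_nonneg (mul_nonneg hμ.le (by positivity)) (Real.log_nonneg ?_)
    nlinarith [Real.exp_pos (Δv/μ)]
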